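/- For 1/2 ≤ α < 1, the function z(r) = [2^{1-α} - (1-α)r²/2]^{1/(1-α)} - 1, defined for 0 ≤ r ≤ R with R = 2^{1-α/2}(1-α)^{-1/2}, satisfies z(0) = 1, z(R) = -1, and the Bogomol'nyi equation -z'(r)/r = (1 + z(r))^α for 0 < r < R. -/

import Mathlib

open Real Set

/-- For `1/2 ≤ α < 1`, the compacton profile
`z(r) = (2^{1-α} - (1-α) r²/2)^{1/(1-α)} - 1` satisfies `z(0) = 1`, `z(R) = -1`
(where `R = 2^{1-α/2} (1-α)^{-1/2}`), and the Bogomol'nyi equation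
`-z'(r)/r = (1+z(r))^α` for `0 < r < R`. -/
theorem stmt5 (α : ℝ) (hα : 1 / 2 ≤ α) (hα1 : α < 1)
    (z : ℝ → ℝ)
    (hz : ∀ r, z r = (2 ^ (1 - α) - (1 - α) * r ^ 2 / 2) ^ ((1 : ℝ) / (1 - α)) - 1)
    (R : ℝ) (hR : R = 2 ^ (1 - α / 2) * (1 - α) ^ (-(1 / 2 : ℝ))) :
    z 0 = 1 ∧ z R = -1 ∧
    ∀ r ∈ Set.Ioo 0 R, ∃ z' : ℝ, HasDerivAt z z' r ∧ -(z' / r) = (1 + z r) ^ α := by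
  have h1α : (0:ℝ) < 1 - α := by linarith
  have hne : (1:ℝ) - α ≠ 0 := h1α.ne'
  have h2 : (0:ℝ) < 2 := two_pos
  have hR2 : R ^ 2 = 2 ^ (2 - α) * (1 - α)⁻¹ := by
    rw [hR, mul_pow, ← Real.rpow_natCast (2 ^ (1 - α/2)) 2,
      ← Real.rpow_natCast ((1-α) ^ (-(1/2:ℝ))) 2,
      ← Real.rpow_mul (by positivity), ← Real.rpow_mul h1α.le]
    norm_num
    rw [Real.rpow_neg_one, show (1 - α/2) * 2 = 2 - α by ring]
  have hkey : (1 - α) * R ^ 2 / 2 = 2 ^ (1 - α) := by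
    have h22 : (2:ℝ) ^ (2 - α) = 2 * 2 ^ (1 - α) := by
      rw [show (2:ℝ) - α = 1 + (1 - α) by ring, Real.rpow_add h2, Real.rpow_one]
    rw [hR2, h22, show (1-α) * (2 * 2 ^ (1-α) * (1-α)⁻¹) / 2
      = 2 ^ (1-α) * ((1-α) * (1-α)⁻¹) by ring, mul_inv_cancel₀ hne, mul_one]
  refine ⟨?_, ?_, ?_⟩
  · rw [hz]
    norm_num
    rw [← Real.rpow_mul h2.le, mul_inv_cancel₀ hne, Real.rpow_one]
    norm_num
  · rw [hz, hkey, sub_self, Real.zero_rpow (by positivity)]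
    norm_num
  · intro r hr
    obtain ⟨hr0, hrR⟩ := hr
    set g : ℝ → ℝ := fun x => 2 ^ (1 - α) - (1 - α) * x ^ 2 / 2 with hg
    have hgr : g r = (1 - α) * (R ^ 2 - r ^ 2) / 2 := by
      simp only [hg, ← hkey]; ring
    have hRpos : 0 < R := lt_trans hr0 hrR
    have hgpos : 0 < g r := by
      rw [hgr]
      have : r ^ 2 < R ^ 2 := by nlinarith
      nlinarith
    have hdg : HasDerivAt g (-((1 - α) * r)) r := by
      have h1 : HasDerivAt (fun x : ℝ => (1 - α) * x ^ 2 / 2) ((1 - α) * (2 * r ^ 1) / 2) r :=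
        ((hasDerivAt_pow 2 r).const_mul (1 - α)).div_const 2
      have := h1.const_sub ((2:ℝ) ^ (1 - α))
      refine this.congr_deriv ?_
      ring
    have hd : HasDerivAt (fun x => g x ^ ((1:ℝ)/(1-α)) - 1)
        (-((1 - α) * r) * ((1:ℝ)/(1-α)) * g r ^ ((1:ℝ)/(1-α) - 1)) r :=
      (hdg.rpow_const (Or.inl hgpos.ne')).sub_const 1
    have hzf : z = fun x => g x ^ ((1:ℝ)/(1-α)) - 1 := funext hz
    refine ⟨_, hzf ▸ hd, ?_⟩
    have hval : -((-((1 - α) * r) * ((1:ℝ)/(1-α)) * g r ^ ((1:ℝ)/(1-α) - 1)) / r)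
        = g r ^ ((1:ℝ)/(1-α) - 1) := by
      field_simp
    rw [hval, hz]
    have h1z : 1 + ((2 ^ (1 - α) - (1 - α) * r ^ 2 / 2) ^ ((1:ℝ)/(1-α)) - 1)
        = g r ^ ((1:ℝ)/(1-α)) := by simp [hg]
    rw [h1z]
    rw [← Real.rpow_mul hgpos.le]
    congr 1
    field_simp
    ring
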